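/- Let (X,θ) be an S-set and (j, Z, ω) a globalization of (X,θ). Let σ : E → Z be the mediating S-function given by the universal property of the constructed globalization (i, E, η), i.e., σ([s,x]) = ω_s(j(x)). Then for each object u of S, σ is injective on E_u, where E_u is the image in E of D_u = {(s,x) ∈ D : c(s) = u}. -/
import Mathlib


structure InvSgpd (S : Type*) (O : Type*) where
  d : S → O
  c : S → O
  mul : S → S → S
  d_mul : ∀ s t, d s = c t → d (mul s t) = d t
  c_mul : ∀ s t, d s = c t → c (mul s t) = c s
  assoc : ∀ p s t, d p = c s → d s = c t → mul (mul p s) t = mul p (mul s t)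
  inv : S → S
  comp_inv : ∀ s, d s = c (inv s)
  inv_comp : ∀ s, d (inv s) = c s
  mul_inv_mul : ∀ s, mul (mul s (inv s)) s = s
  inv_mul_inv : ∀ s, mul (mul (inv s) s) (inv s) = inv s
  inv_unique : ∀ s t, d s = c t → d t = c s →
    mul (mul s t) s = s → mul (mul t s) t = t → t = inv s

namespace InvSgpd
variable {S O : Type*} (G : InvSgpd S O)
def Composable (s t : S) : Prop := G.d s = G.c t
def Idem (e : S) : Prop := G.Composable e e ∧ G.mul e e = e
def le (s t : S) : Prop :=
  G.d s = G.d t ∧ G.c s = G.c t ∧ s = G.mul t (G.mul (G.inv s) s)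
end InvSgpd

/-- A partial action of an inverse semigroupoid `G` on a set (type) `X`:
`dom s` plays the role of `X_s` and `act s` the role of `θ_s : X_{s*} → X_s`
(as a total map whose values are only relevant on `dom (G.inv s)`). -/
structure PAction {S O : Type*} (G : InvSgpd S O) (X : Type*) where
  dom : S → Set X
  act : S → X → X
  maps : ∀ s, ∀ x ∈ dom (G.inv s), act s x ∈ dom s
  /-- (P1) `θ_e = id_{X_e}` for idempotents. -/
  idem_id : ∀ e, G.Idem e → ∀ x ∈ dom e, act e x = x
  /-- (P1) every point lies in some `X_e` with `e` idempotent. -/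
  cover : ∀ x : X, ∃ e, G.Idem e ∧ x ∈ dom e
  /-- (P2) `X_s ⊆ X_{ss*}`. -/
  dom_mono : ∀ s, dom s ⊆ dom (G.mul s (G.inv s))
  /-- (P3) `θ_t⁻¹(X_t ∩ X_{s*}) = X_{(st)*} ∩ X_{t*}` for composable `(s,t)`. -/
  preimage_eq : ∀ s t, G.Composable s t →
    {x | x ∈ dom (G.inv t) ∧ act t x ∈ dom t ∩ dom (G.inv s)}
      = dom (G.inv (G.mul s t)) ∩ dom (G.inv t)
  /-- (P3) `θ_s (θ_t x) = θ_{st} x` on `X_{(st)*} ∩ X_{t*}`. -/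
  mul_act : ∀ s t, G.Composable s t →
    ∀ x ∈ dom (G.inv (G.mul s t)) ∩ dom (G.inv t),
      act s (act t x) = act (G.mul s t) x

namespace PAction
variable {S O X : Type*} {G : InvSgpd S O}

/-- A partial action is global when `X_s = X_{ss*}` for every `s`. -/
def IsGlobal (θ : PAction G X) : Prop := ∀ s, θ.dom s = θ.dom (G.mul s (G.inv s))

end PAction

namespace PAction
variable {S O X : Type*} {G : InvSgpd S O} (θ : PAction G X)

/-- The set `D = {(s,x) ∈ S × X : x ∈ X_{s*s}}`. -/
def Dset : Type _ := {p : S × X // p.2 ∈ θ.dom (G.mul (G.inv p.1) p.1)}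

/-- The relation `∼` on `D`: `(s,x) ∼ (t,y)` iff
(R1) `(t*,s)` is composable, `x ∈ X_{s*t}` and `θ_{t*s}(x) = y`, or
(R2) `s` and `t` are idempotents and `x = y`. -/
def rel (p q : θ.Dset) : Prop :=
  (G.Composable (G.inv q.1.1) p.1.1 ∧
      p.1.2 ∈ θ.dom (G.mul (G.inv p.1.1) q.1.1) ∧
      θ.act (G.mul (G.inv q.1.1) p.1.1) p.1.2 = q.1.2) ∨
    (G.Idem p.1.1 ∧ G.Idem q.1.1 ∧ p.1.2 = q.1.2)

end PAction

namespace PAction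
variable {S O X : Type*} {G : InvSgpd S O} (θ : PAction G X)

/-- The equivalence relation `≈` on `D` generated by `∼`. -/
def relSetoid : Setoid θ.Dset :=
  ⟨Relation.EqvGen θ.rel, Relation.EqvGen.is_equivalence _⟩

/-- `E = D/≈`, the carrier of the constructed globalization. -/
def Env : Type _ := Quotient θ.relSetoid

/-- `E_s`: the image under the quotient map of
`D_s = {(p,x) ∈ D : (s*,p) composable, x ∈ X_{p* s s* p}}`. -/
def Eset (s : S) : Set θ.Env :=
  {c | ∃ p : θ.Dset, Quotient.mk θ.relSetoid p = c ∧
    G.Composable (G.inv s) p.1.1 ∧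
    p.1.2 ∈ θ.dom (G.mul (G.inv p.1.1) (G.mul (G.mul s (G.inv s)) p.1.1))}

end PAction

namespace InvSgpd
variable {S O : Type*} (G : InvSgpd S O)

theorem inv_inv' (s : S) : G.inv (G.inv s) = s :=
  (G.inv_unique (G.inv s) s (G.inv_comp s) (G.comp_inv s)
    (G.inv_mul_inv s) (G.mul_inv_mul s)).symm

theorem idem_invmul (s : S) : G.Idem (G.mul (G.inv s) s) := by
  have hcomp : G.Composable (G.mul (G.inv s) s) (G.mul (G.inv s) s) := by
    unfold Composable
    rw [G.d_mul _ _ (G.inv_comp s), G.c_mul _ _ (G.inv_comp s), G.comp_inv]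
  refine ⟨hcomp, ?_⟩
  have h := G.assoc (G.mul (G.inv s) s) (G.inv s) s ?_ (G.inv_comp s)
  · rw [G.inv_mul_inv s] at h
    exact h.symm
  · rw [G.d_mul _ _ (G.inv_comp s), G.comp_inv]

theorem inv_idem {e : S} (he : G.Idem e) : G.inv e = e := by
  refine (G.inv_unique e e he.1 he.1 ?_ ?_).symm <;> rw [he.2, he.2]

end InvSgpd

/-- Let `(j, Z, ω)` be a globalization of `(X, θ)` (so `ω` is global, `j` is an
injective `S`-function with `X_s = j⁻¹(ω_s(j(X) ∩ Z_{s*}))`).  The mediating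
`S`-function `σ : E → Z`, `σ([s,x]) = ω_s(j(x))`, given by the universal
property of the constructed globalization, is injective on each `E_u`,
`u ∈ S⁰`: if two classes have representatives `(s,x)`, `(t,y)` with
`c(s) = c(t) = u` and equal `σ`-values, the classes coincide. -/
theorem mediating_injOn {S O X Z : Type*} (G : InvSgpd S O)
    (θ : PAction G X) (ω : PAction G Z) (hglob : ω.IsGlobal) (j : X → Z)
    (hj_dom : ∀ s, ∀ x ∈ θ.dom s, j x ∈ ω.dom s)
    (hj_act : ∀ s, ∀ x ∈ θ.dom (G.inv s), j (θ.act s x) = ω.act s (j x))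
    (hj_inj : Function.Injective j)
    (hj_emb : ∀ s, θ.dom s
      = j ⁻¹' (ω.act s '' (Set.range j ∩ ω.dom (G.inv s))))
    (u : O) (p q : θ.Dset)
    (hpu : G.c p.1.1 = u) (hqu : G.c q.1.1 = u)
    (hσ : ω.act p.1.1 (j p.1.2) = ω.act q.1.1 (j q.1.2)) :
    Quotient.mk θ.relSetoid p = Quotient.mk θ.relSetoid q := by
  obtain ⟨⟨s, x⟩, hx⟩ := p
  obtain ⟨⟨t, y⟩, hy⟩ := q
  simp only at hpu hqu hσ hx hy ⊢
  -- key composability facts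
  have hcs : G.Composable (G.inv t) s := by
    unfold InvSgpd.Composable; rw [G.inv_comp, hqu, hpu]
  have hcs' : G.Composable (G.inv s) t := by
    unfold InvSgpd.Composable; rw [G.inv_comp, hqu, hpu]
  set r : S := G.mul (G.inv t) s with hr
  set r' : S := G.mul (G.inv s) t with hr'
  -- domains of j x, j y
  have hdom_s : ω.dom (G.inv s) = ω.dom (G.mul (G.inv s) s) := by
    have := hglob (G.inv s); rwa [G.inv_inv'] at this
  have hdom_t : ω.dom (G.inv t) = ω.dom (G.mul (G.inv t) t) := by
    have := hglob (G.inv t); rwa [G.inv_inv'] at this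
  have hjx_ss : j x ∈ ω.dom (G.mul (G.inv s) s) := hj_dom _ _ hx
  have hjy_tt : j y ∈ ω.dom (G.mul (G.inv t) t) := hj_dom _ _ hy
  have hjx_dom : j x ∈ ω.dom (G.inv s) := by rw [hdom_s]; exact hjx_ss
  have hjy_dom : j y ∈ ω.dom (G.inv t) := by rw [hdom_t]; exact hjy_tt
  have hz1 : ω.act s (j x) ∈ ω.dom s := ω.maps s _ hjx_dom
  have hz2 : ω.act t (j y) ∈ ω.dom t := ω.maps t _ hjy_dom
  -- j x ∈ dom (inv r)
  have hjx_invr : j x ∈ ω.dom (G.inv r) := by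
    have h := ω.preimage_eq (G.inv t) s hcs
    have hmem : j x ∈ {z | z ∈ ω.dom (G.inv s) ∧
        ω.act s z ∈ ω.dom s ∩ ω.dom (G.inv (G.inv t))} := by
      refine ⟨hjx_dom, hz1, ?_⟩
      rw [G.inv_inv', hσ]; exact hz2
    rw [h] at hmem
    exact hmem.1
  -- j y ∈ dom (inv r')
  have hjy_invr' : j y ∈ ω.dom (G.inv r') := by
    have h := ω.preimage_eq (G.inv s) t hcs'
    have hmem : j y ∈ {z | z ∈ ω.dom (G.inv t) ∧
        ω.act t z ∈ ω.dom t ∩ ω.dom (G.inv (G.inv s))} := by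
      refine ⟨hjy_dom, hz2, ?_⟩
      rw [G.inv_inv', ← hσ]; exact hz1
    rw [h] at hmem
    exact hmem.1
  -- act (t* t) (j y) = j y and act (s* s) (j x) = j x
  have hinv_tt : G.inv (G.mul (G.inv t) t) = G.mul (G.inv t) t :=
    G.inv_idem (G.idem_invmul t)
  have hinv_ss : G.inv (G.mul (G.inv s) s) = G.mul (G.inv s) s :=
    G.inv_idem (G.idem_invmul s)
  -- ω.act r (j x) = j y
  have hry : ω.act r (j x) = j y := by
    have h1 := ω.mul_act (G.inv t) s hcs (j x) ⟨hjx_invr, hjx_dom⟩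
    have h2 := ω.mul_act (G.inv t) t (G.inv_comp t) (j y)
      ⟨by rw [hinv_tt]; exact hjy_tt, hjy_dom⟩
    have h3 : ω.act (G.mul (G.inv t) t) (j y) = j y :=
      ω.idem_id _ (G.idem_invmul t) _ hjy_tt
    rw [← h1, hσ, h2, h3]
  -- ω.act r' (j y) = j x
  have hry' : ω.act r' (j y) = j x := by
    have h1 := ω.mul_act (G.inv s) t hcs' (j y) ⟨hjy_invr', hjy_dom⟩
    have h2 := ω.mul_act (G.inv s) s (G.inv_comp s) (j x)
      ⟨by rw [hinv_ss]; exact hjx_ss, hjx_dom⟩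
    have h3 : ω.act (G.mul (G.inv s) s) (j x) = j x :=
      ω.idem_id _ (G.idem_invmul s) _ hjx_ss
    rw [← h1, ← hσ, h2, h3]
  have hjy_in_r : j y ∈ ω.dom r := hry ▸ ω.maps r _ hjx_invr
  -- ω.act (inv r) (j y) = j x
  have hback : ω.act (G.inv r) (j y) = j x := by
    have hinv_rr : G.inv (G.mul (G.inv r) r) = G.mul (G.inv r) r :=
      G.inv_idem (G.idem_invmul r)
    have hdom_r : ω.dom (G.inv r) = ω.dom (G.mul (G.inv r) r) := by
      have := hglob (G.inv r); rwa [G.inv_inv'] at this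
    have h1 := ω.mul_act (G.inv r) r (G.inv_comp r) (j x)
      ⟨by rw [hinv_rr, ← hdom_r]; exact hjx_invr, hjx_invr⟩
    have h3 : ω.act (G.mul (G.inv r) r) (j x) = j x :=
      ω.idem_id _ (G.idem_invmul r) _ (hdom_r ▸ hjx_invr)
    rw [← hry, h1, h3]
  -- x ∈ θ.dom (inv r)
  have hx_invr : x ∈ θ.dom (G.inv r) := by
    rw [hj_emb (G.inv r)]
    refine ⟨j y, ⟨⟨y, rfl⟩, ?_⟩, hback⟩
    rw [G.inv_inv']; exact hjy_in_r
  -- x ∈ θ.dom r'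
  have hx_r' : x ∈ θ.dom r' := by
    rw [hj_emb r']
    exact ⟨j y, ⟨⟨y, rfl⟩, hjy_invr'⟩, hry'⟩
  -- θ.act r x = y
  have hact : θ.act r x = y := by
    apply hj_inj
    rw [hj_act r x hx_invr, hry]
  exact Quot.sound (Relation.EqvGen.rel _ _ (Or.inl ⟨hcs, hx_r', hact⟩))
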